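/- For every $k \geq 1$ and $n$ divisible by $k$, there is a set of $n$ points in $\mathbb{R}^k$ (hence in $\mathbb{R}^d$ for any $d \geq k$) that spans at least $k(n/k - 1)(n/k)^{k-1}$ $k$-dimensional simplices of minimum nonzero $k$-volume. -/

import Mathlib

/-- The `k`-volume of the `k`-simplex with vertices `p 0, …, p k` in `ℝᵏ`. -/
noncomputable def simplexVol (k : ℕ) (p : Fin (k + 1) → (Fin k → ℝ)) : ℝ :=
  |Matrix.det (Matrix.of fun i : Fin k => p i.succ - p 0)| / (Nat.factorial k)

namespace Stmt3Aux

variable {k m : ℕ} [NeZero k]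

/-- Integer coordinates of the grid point on line `q.1` at position `q.2`. -/
def Pz (q : Fin k × Fin m) (x : Fin k) : ℤ :=
  if x = 0 then (q.2.1 : ℤ) else if x = q.1 then 1 else 0

/-- The real point. -/
noncomputable def P (q : Fin k × Fin m) : Fin k → ℝ := fun x => (Pz q x : ℝ)

lemma Pz_inj : Function.Injective (Pz (k := k) (m := m)) := by
  rintro ⟨j, i⟩ ⟨j', i'⟩ h
  have h0 := congrFun h 0
  simp only [Pz, if_pos rfl] at h0
  have hi : i = i' := by
    apply Fin.ext
    exact_mod_cast h0
  have hj : j = j' := by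
    by_contra hne
    by_cases hj0 : j = 0
    · have hj'0 : j' ≠ 0 := by
        intro hz; exact hne (hj0.trans hz.symm)
      have hne' : j' ≠ j := fun hh => hne hh.symm
      have hx := congrFun h j'
      simp [Pz, hj'0, hne'] at hx
    · have hx := congrFun h j
      simp [Pz, hj0, hne] at hx
  rw [hi, hj]

lemma P_inj : Function.Injective (P (k := k) (m := m)) := by
  intro q q' h
  exact Pz_inj (funext fun x => Int.cast_injective (congrFun h x))

/-- Index type for the minimal simplices. -/
abbrev Idx (k m : ℕ) := Σ j0 : Fin k, Fin (m - 1) × ({j : Fin k // j ≠ j0} → Fin m)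

variable (t : Idx k m)

def aL : Fin m := ⟨t.2.1.1, by have := t.2.1.2; omega⟩

def aH : Fin m := ⟨t.2.1.1 + 1, by have := t.2.1.2; omega⟩

lemma aL_ne_aH : aL t ≠ aH t := by
  simp [aL, aH, Fin.ext_iff]

def fext : Fin k → Fin m := fun j => if h : j = t.1 then aL t else t.2.2 ⟨j, h⟩

lemma fext_t1 : fext t t.1 = aL t := dif_pos rfl

lemma fext_ne (j : Fin k) (h : j ≠ t.1) : fext t j = t.2.2 ⟨j, h⟩ := dif_neg h

def idxF : Fin (k + 1) → Fin k × Fin m :=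
  Fin.cases ((0 : Fin k), fext t 0) (fun i => if i = 0 then (t.1, aH t) else (i, fext t i))

lemma idxF_zero : idxF t 0 = ((0 : Fin k), fext t 0) := rfl

lemma idxF_succ (i : Fin k) :
    idxF t i.succ = if i = 0 then (t.1, aH t) else (i, fext t i) := by
  unfold idxF
  rw [Fin.cases_succ]

def AF : Finset (Fin k × Fin m) :=
  insert (t.1, aH t) (Finset.univ.image fun j => (j, fext t j))

lemma mem_AF {z : Fin k × Fin m} : z ∈ AF t ↔ z = (t.1, aH t) ∨ z.2 = fext t z.1 := by
  simp only [AF, Finset.mem_insert, Finset.mem_image, Finset.mem_univ, true_and]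
  constructor
  · rintro (h | ⟨j, rfl⟩)
    · exact Or.inl h
    · exact Or.inr rfl
  · rintro (h | h)
    · exact Or.inl h
    · exact Or.inr ⟨z.1, by rw [Prod.ext_iff]; exact ⟨rfl, h.symm⟩⟩

lemma card_AF : (AF t).card = k + 1 := by
  rw [AF, Finset.card_insert_of_notMem, Finset.card_image_of_injective _
      (fun a b h => congrArg Prod.fst h), Finset.card_univ, Fintype.card_fin]
  intro hmem
  obtain ⟨j, _, hj⟩ := Finset.mem_image.mp hmem
  have h1 : j = t.1 := congrArg Prod.fst hj
  have h2 : fext t j = aH t := congrArg Prod.snd hj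
  rw [h1, fext_t1] at h2
  exact aL_ne_aH t h2

lemma image_idxF : Finset.univ.image (idxF t) = AF t := by
  ext z
  simp only [Finset.mem_image, Finset.mem_univ, true_and, mem_AF]
  constructor
  · rintro ⟨i, rfl⟩
    induction i using Fin.cases with
    | zero => rw [idxF_zero]; exact Or.inr rfl
    | succ i =>
      rw [idxF_succ]
      by_cases hi : i = 0
      · rw [if_pos hi]; exact Or.inl rfl
      · rw [if_neg hi]; exact Or.inr rfl
  · rintro (rfl | h)
    · exact ⟨Fin.succ 0, by rw [idxF_succ, if_pos rfl]⟩
    · by_cases hz : z.1 = 0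
      · refine ⟨0, ?_⟩
        rw [idxF_zero, ← hz, ← h]
      · refine ⟨Fin.succ z.1, ?_⟩
        rw [idxF_succ, if_neg hz, ← h]

lemma idxF_inj : Function.Injective (idxF t) := by
  rw [← Set.injOn_univ, ← Finset.coe_univ, ← Finset.card_image_iff,
    image_idxF, card_AF, Finset.card_univ, Fintype.card_fin]

lemma AF_inj : Function.Injective (AF (k := k) (m := m)) := by
  rintro ⟨j0, a, f⟩ ⟨j1, b, g⟩ h
  have hH : ((⟨j0, (a, f)⟩ : Idx k m).1, aH ⟨j0, (a, f)⟩) ∈ AF (⟨j1, (b, g)⟩ : Idx k m) :=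
    h ▸ Finset.mem_insert_self _ _
  have hL : ((⟨j0, (a, f)⟩ : Idx k m).1, aL ⟨j0, (a, f)⟩) ∈ AF (⟨j1, (b, g)⟩ : Idx k m) := by
    rw [← h, mem_AF]
    exact Or.inr (fext_t1 _).symm
  rw [mem_AF] at hH hL
  simp only [Prod.mk.injEq] at hH hL
  have hj : j0 = j1 := by
    by_contra hne
    have h1 : aH (⟨j0, (a, f)⟩ : Idx k m) = fext (⟨j1, (b, g)⟩ : Idx k m) j0 := by
      rcases hH with ⟨h1, -⟩ | h1
      · exact absurd h1 hne
      · exact h1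
    have h2 : aL (⟨j0, (a, f)⟩ : Idx k m) = fext (⟨j1, (b, g)⟩ : Idx k m) j0 := by
      rcases hL with ⟨h2, -⟩ | h2
      · exact absurd h2 hne
      · exact h2
    exact aL_ne_aH (⟨j0, (a, f)⟩ : Idx k m) (h2.trans h1.symm)
  subst hj
  have hfx : fext (⟨j0, (b, g)⟩ : Idx k m) j0 = aL (⟨j0, (b, g)⟩ : Idx k m) := fext_t1 _
  have haH1 : (aH (⟨j0, (a, f)⟩ : Idx k m)).1 = a.1 + 1 := rfl
  have haH2 : (aH (⟨j0, (b, g)⟩ : Idx k m)).1 = b.1 + 1 := rfl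
  have haL1 : (aL (⟨j0, (a, f)⟩ : Idx k m)).1 = a.1 := rfl
  have haL2 : (aL (⟨j0, (b, g)⟩ : Idx k m)).1 = b.1 := rfl
  have ha : a = b := by
    apply Fin.ext
    rcases hH with ⟨-, h1⟩ | h1
    · have hv1 := congrArg Fin.val h1
      omega
    · have hv1 := congrArg Fin.val (h1.trans hfx)
      rcases hL with ⟨-, h2⟩ | h2
      · have hv2 := congrArg Fin.val h2
        omega
      · have hv2 := congrArg Fin.val (h2.trans hfx)
        omega
  subst ha
  have hf : f = g := by
    funext j
    obtain ⟨j, hjne⟩ := j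
    have hmem2 : ((j : Fin k), fext (⟨j0, (a, f)⟩ : Idx k m) j)
        ∈ AF (⟨j0, (a, g)⟩ : Idx k m) := by
      rw [← h, mem_AF]
      exact Or.inr rfl
    rw [mem_AF] at hmem2
    simp only [Prod.mk.injEq] at hmem2
    rcases hmem2 with ⟨h1, -⟩ | h1
    · exact absurd h1 hjne
    · have h1' : fext (⟨j0, (a, f)⟩ : Idx k m) j = fext (⟨j0, (a, g)⟩ : Idx k m) j := h1
      have e1 : fext (⟨j0, (a, f)⟩ : Idx k m) j = f ⟨j, hjne⟩ := fext_ne _ j hjne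
      have e2 : fext (⟨j0, (a, g)⟩ : Idx k m) j = g ⟨j, hjne⟩ := fext_ne _ j hjne
      exact e1.symm.trans (h1'.trans e2)
  rw [hf]

lemma detL (d : Fin k → ℤ) (hd : d 0 = 1) :
    (Matrix.of fun i x : Fin k => if x = 0 then d i else if x = i then 1 else 0).det = 1 := by
  have htri : Matrix.BlockTriangular
      (Matrix.of fun i x : Fin k => if x = 0 then d i else if x = i then 1 else 0)
      OrderDual.toDual := by
    intro i j hij
    have hij' : i < j := hij
    have hj0 : j ≠ 0 := by
      intro hz
      rw [hz] at hij'
      exact absurd hij' (by simp [Fin.lt_def])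
    have hji : j ≠ i := ne_of_gt hij'
    simp [Matrix.of_apply, if_neg hj0, if_neg hji]
  rw [Matrix.det_of_lowerTriangular _ htri]
  refine Finset.prod_eq_one fun i _ => ?_
  by_cases h : i = 0 <;> simp [h, hd]

lemma Pz_idxF_zero (x : Fin k) :
    Pz (idxF t 0) x = if x = 0 then ((fext t 0 : ℕ) : ℤ) else 0 := by
  rw [idxF_zero]
  unfold Pz
  by_cases hx : x = 0 <;> simp [hx]

lemma det_idxF :
    (Matrix.of fun i x : Fin k => Pz (idxF t i.succ) x - Pz (idxF t 0) x).det = 1 := by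
  have hrow : ∀ i : Fin k, i ≠ 0 → ∀ x,
      Pz (idxF t i.succ) x - Pz (idxF t 0) x
        = if x = 0 then ((fext t i : ℕ) : ℤ) - ((fext t 0 : ℕ) : ℤ)
          else if x = i then 1 else 0 := by
    intro i hi x
    have hx1 : idxF t i.succ = (i, fext t i) := by rw [idxF_succ, if_neg hi]
    rw [hx1, Pz_idxF_zero]
    unfold Pz
    by_cases hx : x = 0 <;> simp [hx]
  have hrow0 : ∀ x : Fin k, Pz (idxF t (Fin.succ 0)) x - Pz (idxF t 0) x
      = if x = 0 then ((aH t : ℕ) : ℤ) - ((fext t 0 : ℕ) : ℤ)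
        else if x = t.1 then 1 else 0 := by
    intro x
    have hx1 : idxF t (Fin.succ 0) = (t.1, aH t) := by rw [idxF_succ, if_pos rfl]
    rw [hx1, Pz_idxF_zero]
    unfold Pz
    by_cases hx : x = 0 <;> simp [hx]
  by_cases hj : t.1 = 0
  · have hf0 : fext t 0 = aL t := by rw [← hj]; exact fext_t1 t
    have hmat : (Matrix.of fun i x : Fin k => Pz (idxF t i.succ) x - Pz (idxF t 0) x)
        = Matrix.of fun i x : Fin k =>
            if x = 0 then (if i = 0 then (1 : ℤ)
              else ((fext t i : ℕ) : ℤ) - ((fext t 0 : ℕ) : ℤ))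
            else if x = i then 1 else 0 := by
      ext i x
      simp only [Matrix.of_apply]
      by_cases hi : i = 0
      · subst hi
        rw [hrow0 x]
        by_cases hx : x = 0
        · subst hx
          rw [hf0]
          simp [aH, aL]
        · simp only [if_neg hx]
          rw [hj, if_neg hx]
      · rw [hrow i hi x]
        simp [hi]
    rw [hmat]
    exact detL _ (by simp)
  · have h0j : (0 : Fin k) ≠ t.1 := fun hh => hj hh.symm
    have key := Matrix.det_updateRow_add_smul_self
      (Matrix.of fun i x : Fin k => Pz (idxF t i.succ) x - Pz (idxF t 0) x) h0j (-1 : ℤ)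
    have hrowj : ∀ x : Fin k, Pz (idxF t (Fin.succ t.1)) x - Pz (idxF t 0) x
        = if x = 0 then ((aL t : ℕ) : ℤ) - ((fext t 0 : ℕ) : ℤ)
          else if x = t.1 then 1 else 0 := by
      intro x
      rw [hrow t.1 hj x, fext_t1]
    have hmat : (Matrix.updateRow
          (Matrix.of fun i x : Fin k => Pz (idxF t i.succ) x - Pz (idxF t 0) x) 0
          ((Matrix.of fun i x : Fin k => Pz (idxF t i.succ) x - Pz (idxF t 0) x) 0
            + (-1 : ℤ) • (Matrix.of fun i x : Fin k =>
                Pz (idxF t i.succ) x - Pz (idxF t 0) x) t.1))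
        = Matrix.of fun i x : Fin k =>
            if x = 0 then (if i = 0 then (1 : ℤ)
              else ((fext t i : ℕ) : ℤ) - ((fext t 0 : ℕ) : ℤ))
            else if x = i then 1 else 0 := by
      ext i x
      by_cases hi : i = 0
      · subst hi
        rw [Matrix.updateRow_self]
        simp only [Pi.add_apply, Pi.smul_apply, Matrix.of_apply, smul_eq_mul, neg_mul, one_mul]
        rw [hrow0 x, hrowj x]
        by_cases hx : x = 0
        · subst hx
          simp [aH, aL]
        · simp only [if_neg hx]
          ring
      · rw [Matrix.updateRow_ne hi]
        simp only [Matrix.of_apply]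
        rw [hrow i hi x]
        simp [hi]
    rw [← key, hmat]
    exact detL _ (by simp)

lemma card_Idx (k m : ℕ) : Nat.card (Idx k m) = k * ((m - 1) * m ^ (k - 1)) := by
  rw [Nat.card_eq_fintype_card, Fintype.card_sigma]
  have hcard : ∀ j0 : Fin k,
      Fintype.card (Fin (m - 1) × ({j : Fin k // j ≠ j0} → Fin m))
        = (m - 1) * m ^ (k - 1) := by
    intro j0
    rw [Fintype.card_prod, Fintype.card_fin, Fintype.card_fun, Fintype.card_fin]
    congr 2
    rw [Fintype.card_subtype]
    rw [show (Finset.filter (fun j => j ≠ j0) Finset.univ) = Finset.univ.erase j0 from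
      Finset.filter_ne' _ _]
    rw [Finset.card_erase_of_mem (Finset.mem_univ _), Finset.card_univ, Fintype.card_fin]
  simp only [hcard, Finset.sum_const, Finset.card_univ, Fintype.card_fin, smul_eq_mul]

end Stmt3Aux

open Stmt3Aux in
/-- for every `k ≥ 1` and `n` divisible by `k` there is a set of
`n` points in `ℝᵏ` spanning at least `k * (n/k - 1) * (n/k)^(k-1)` simplices of
minimum nonzero `k`-volume. -/
theorem stmt3 (k n : ℕ) (hk : 1 ≤ k) (hkn : k ∣ n) :
    ∃ S : Finset (Fin k → ℝ), S.card = n ∧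
      ∃ v0 : ℝ, 0 < v0 ∧
        (∀ p : Fin (k + 1) → (Fin k → ℝ), (∀ i, p i ∈ S) →
          simplexVol k p ≠ 0 → v0 ≤ simplexVol k p) ∧
        k * (n / k - 1) * (n / k) ^ (k - 1) ≤
          {T : Finset (Fin k → ℝ) | T ⊆ S ∧ T.card = k + 1 ∧
            ∃ p : Fin (k + 1) → (Fin k → ℝ), Set.range p = ↑T ∧
              simplexVol k p = v0}.ncard := by
  haveI : NeZero k := ⟨by omega⟩
  obtain ⟨m, rfl⟩ := hkn
  have hdiv : k * m / k = m := Nat.mul_div_cancel_left _ (by omega)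
  rw [hdiv]
  have hfac : (0 : ℝ) < (Nat.factorial k : ℝ) := by positivity
  refine ⟨Finset.image (P (k := k) (m := m)) Finset.univ, ?_, 1 / (Nat.factorial k : ℝ),
    by positivity, ?_, ?_⟩
  · rw [Finset.card_image_of_injective _ P_inj, Finset.card_univ, Fintype.card_prod,
      Fintype.card_fin, Fintype.card_fin]
  · -- lower bound on all nonzero volumes
    intro p hp hne
    have hq : ∀ i, ∃ q : Fin k × Fin m, P q = p i := by
      intro i
      obtain ⟨q, _, hq⟩ := Finset.mem_image.mp (hp i)
      exact ⟨q, hq⟩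
    choose q hqe using hq
    have hmat : (Matrix.of fun i : Fin k => p i.succ - p 0)
        = (Matrix.of fun i x : Fin k => Pz (q i.succ) x - Pz (q 0) x).map
            (Int.castRingHom ℝ) := by
      ext i x
      simp [Matrix.map_apply, ← hqe, P]
    have hdet : Matrix.det (Matrix.of fun i : Fin k => p i.succ - p 0)
        = (((Matrix.of fun i x : Fin k => Pz (q i.succ) x - Pz (q 0) x).det : ℤ) : ℝ) := by
      rw [hmat, ← RingHom.mapMatrix_apply, ← RingHom.map_det]
      rfl
    set dz := (Matrix.of fun i x : Fin k => Pz (q i.succ) x - Pz (q 0) x).det with hdz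
    have hdz0 : dz ≠ 0 := by
      intro h
      apply hne
      simp only [simplexVol]
      rw [hdet, h]
      simp
    have h1 : (1 : ℝ) ≤ |((dz : ℤ) : ℝ)| := by
      rw [← Int.cast_abs]
      exact_mod_cast Int.one_le_abs hdz0
    simp only [simplexVol]
    rw [hdet]
    gcongr
  · -- counting
    set S := Finset.image (P (k := k) (m := m)) Finset.univ with hS
    set v0 := 1 / (Nat.factorial k : ℝ) with hv0
    set F : Idx k m → Finset (Fin k → ℝ) := fun t => Finset.image P (AF t) with hF
    set 𝒯 : Set (Finset (Fin k → ℝ)) :=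
      {T : Finset (Fin k → ℝ) | T ⊆ S ∧ T.card = k + 1 ∧
        ∃ p : Fin (k + 1) → (Fin k → ℝ), Set.range p = ↑T ∧ simplexVol k p = v0} with hT
    have hFinj : Function.Injective F := by
      intro t s h
      exact AF_inj (Finset.image_injective P_inj h)
    have hmem : ∀ t : Idx k m, F t ∈ 𝒯 := by
      intro t
      simp only [hF]
      refine ⟨?_, ?_, P ∘ idxF t, ?_, ?_⟩
      · intro x hx
        obtain ⟨z, _, hz⟩ := Finset.mem_image.mp hx
        exact Finset.mem_image.mpr ⟨z, Finset.mem_univ _, hz⟩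
      · rw [Finset.card_image_of_injective _ P_inj, card_AF]
      · rw [Set.range_comp, ← Set.image_univ, ← Finset.coe_univ, ← Finset.coe_image,
          image_idxF, ← Finset.coe_image]
      · have hmm : (Matrix.of fun i : Fin k => (P ∘ idxF t) i.succ - (P ∘ idxF t) 0)
            = (Matrix.of fun i x : Fin k => Pz (idxF t i.succ) x - Pz (idxF t 0) x).map
                (Int.castRingHom ℝ) := by
          ext i x
          simp [Matrix.map_apply, P]
        simp only [simplexVol]
        rw [hmm, ← RingHom.mapMatrix_apply, ← RingHom.map_det, det_idxF]
        simp [hv0]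
    have hfin : 𝒯.Finite := by
      apply Set.Finite.subset (Finset.finite_toSet S.powerset)
      intro T hT'
      simpa [Finset.mem_powerset] using hT'.1
    have hrange : Set.range F ⊆ 𝒯 := by
      rintro _ ⟨t, rfl⟩
      exact hmem t
    have hchain : Nat.card (Idx k m) ≤ 𝒯.ncard := by
      have h1 : (Set.range F).ncard = Nat.card (Idx k m) := by
        rw [← Set.image_univ, Set.ncard_image_of_injective _ hFinj, Set.ncard_univ]
      rw [← h1]
      exact Set.ncard_le_ncard hrange hfin
    calc k * (m - 1) * m ^ (k - 1) = k * ((m - 1) * m ^ (k - 1)) := by ring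
      _ = Nat.card (Idx k m) := (card_Idx k m).symm
      _ ≤ 𝒯.ncard := hchain
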